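/- Let λ ∈ ℤ^m with λ_1 ≥ ⋯ ≥ λ_m ≥ 0 and let δ = (m,m−1,...,1). For S ⊆ [m], let ι_λ(S) be the tuple obtained from λ+δ by negating the entries in positions indexed by S. Then the permutation sorting ι_λ(S) into strictly decreasing order has sign (−1)^{m|S| + Σ(S)}, where Σ(S) is the sum of the elements of S. -/

import Mathlib

open Finset Equiv Equiv.Perm

private lemma sign_eq_signAux' {n : ℕ} (f : Equiv.Perm (Fin n)) :
    Equiv.Perm.sign f = Equiv.Perm.signAux f :=
  Equiv.Perm.swap_induction_on f (by simp) fun g x y hxy ih => by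
    rw [Equiv.Perm.signAux_mul, Equiv.Perm.signAux_swap hxy, map_mul,
      Equiv.Perm.sign_swap hxy, ih]

/-- Sign of the sorting permutation: let `λ + δ` (with `δ = (m,…,1)`) have strictly decreasing
positive entries and let `ι_λ(S)` negate the entries in positions of `S`. Any permutation `σ`
rearranging `ι_λ(S)` into strictly decreasing order has sign `(−1)^{m|S| + Σ(S)}` (with `Σ(S)`
the sum of the 1-indexed positions in `S`). -/
theorem stmt6 (m : ℕ) (lam : Fin m → ℤ)
    (ha : StrictAnti fun j : Fin m => lam j + ((m : ℤ) - (j : ℕ)))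
    (hpos : ∀ j : Fin m, 0 < lam j + ((m : ℤ) - (j : ℕ)))
    (S : Finset (Fin m)) (σ : Equiv.Perm (Fin m))
    (hσ : StrictAnti fun j : Fin m =>
      if σ j ∈ S then -(lam (σ j) + ((m : ℤ) - ((σ j : ℕ))))
      else lam (σ j) + ((m : ℤ) - ((σ j : ℕ)))) :
    Equiv.Perm.sign σ = (-1 : ℤˣ) ^ (m * S.card + ∑ s ∈ S, ((s : ℕ) + 1)) := by
  -- key: for v < u, the positions are flipped iff v ∈ S
  have key : ∀ u v : Fin m, v < u → (σ⁻¹ u < σ⁻¹ v ↔ v ∈ S) := by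
    intro u v hvu
    rw [← hσ.lt_iff_gt]
    simp only [Equiv.Perm.coe_inv, Equiv.apply_symm_apply]
    have h1 : lam u + ((m : ℤ) - (u : ℕ)) < lam v + ((m : ℤ) - (v : ℕ)) := ha hvu
    have h2 : 0 < lam u + ((m : ℤ) - (u : ℕ)) := hpos u
    have h3 : 0 < lam v + ((m : ℤ) - (v : ℕ)) := hpos v
    split_ifs with hv hu hu
    · exact iff_of_true (by linarith) hv
    · exact iff_of_true (by linarith) hv
    · exact iff_of_false (by linarith) hv
    · exact iff_of_false (by linarith) hv
  rw [sign_eq_signAux', ← Equiv.Perm.signAux_inv]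
  unfold Equiv.Perm.signAux
  have hcongr : ∀ x ∈ Equiv.Perm.finPairsLT m,
      (if σ⁻¹ x.1 ≤ σ⁻¹ x.2 then (-1 : ℤˣ) else 1) = (if x.2 ∈ S then -1 else 1) := by
    intro x hx
    rw [Equiv.Perm.mem_finPairsLT] at hx
    have hne : σ⁻¹ x.1 ≠ σ⁻¹ x.2 := fun h => absurd (σ⁻¹.injective h) hx.ne'
    by_cases hS : x.2 ∈ S
    · rw [if_pos hS, if_pos (le_of_lt ((key x.1 x.2 hx).2 hS))]
    · rw [if_neg hS, if_neg fun h => hS ((key x.1 x.2 hx).1 (h.lt_of_ne hne))]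
  rw [Finset.prod_congr rfl hcongr]
  have hset : Equiv.Perm.finPairsLT m = Finset.univ.sigma (fun a : Fin m => Finset.Iio a) := by
    ext x
    simp [Equiv.Perm.mem_finPairsLT, Finset.mem_sigma]
  rw [hset, Finset.prod_sigma]
  rw [Finset.prod_comm' (t' := (Finset.univ : Finset (Fin m)))
    (s' := fun b : Fin m => Finset.Ioi b) (by simp)]
  have hterm : ∀ b : Fin m,
      (∏ _a ∈ Finset.Ioi b, (if b ∈ S then (-1 : ℤˣ) else 1))
        = if b ∈ S then (-1 : ℤˣ) ^ (m + (b : ℕ) + 1) else 1 := by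
    intro b
    rw [Finset.prod_const, Fin.card_Ioi]
    split_ifs
    · have hb := b.isLt
      rcases Nat.even_or_odd (m - 1 - (b : ℕ)) with he | ho
      · have h2 : Even (m + (b : ℕ) + 1) := by rw [Nat.even_iff] at he ⊢; omega
        rw [he.neg_one_pow, h2.neg_one_pow]
      · have h2 : Odd (m + (b : ℕ) + 1) := by rw [Nat.odd_iff] at ho ⊢; omega
        rw [ho.neg_one_pow, h2.neg_one_pow]
    · exact one_pow _
  rw [Finset.prod_congr rfl (fun b _ => hterm b), Finset.prod_ite_mem, Finset.univ_inter,
    Finset.prod_pow_eq_pow_sum]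
  congr 1
  simp only [Finset.sum_add_distrib, Finset.sum_const, smul_eq_mul, mul_one]
  ring
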